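/- Let $X, Y, Z$ be non-negative real random variables such that $X$ is independent of $Y$ and $X$ is independent of $Z$. If $X + Y$ and $X + Z$ have the same distribution, then $Y$ and $Z$ have the same distribution. -/

import Mathlib

open MeasureTheory ProbabilityTheory

namespace CancelAux

noncomputable section

local notation "I01" => Set.Icc (0:ℝ) 1

/-- A continuous function on a compact space is integrable w.r.t. a finite measure. -/
lemma integrable_of_continuousMap {μ : Measure I01} [IsFiniteMeasure μ]
    (g : C(I01, ℝ)) : Integrable (fun x => g x) μ := by
  have := (BoundedContinuousFunction.mkOfCompact g).integrable μ
  exact this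

/-- Equal moments implies equal integrals of polynomials. -/
lemma integral_poly_eq {μ ν : Measure I01} [IsFiniteMeasure μ] [IsFiniteMeasure ν]
    (h : ∀ n : ℕ, ∫ x : I01, (x : ℝ) ^ n ∂μ = ∫ x : I01, (x : ℝ) ^ n ∂ν)
    (p : Polynomial ℝ) :
    ∫ x : I01, p.eval (x : ℝ) ∂μ = ∫ x : I01, p.eval (x : ℝ) ∂ν := by
  have key : ∀ (m : Measure I01) [IsFiniteMeasure m],
      ∫ x : I01, p.eval (x : ℝ) ∂m
        = ∑ i ∈ Finset.range (p.natDegree + 1), p.coeff i * ∫ x : I01, (x : ℝ) ^ i ∂m := by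
    intro m _
    have : ∀ x : I01, p.eval (x : ℝ)
        = ∑ i ∈ Finset.range (p.natDegree + 1), p.coeff i * (x : ℝ) ^ i := by
      intro x
      exact p.eval_eq_sum_range (x : ℝ)
    simp_rw [this]
    rw [integral_finset_sum]
    · refine Finset.sum_congr rfl fun i _ => ?_
      rw [integral_const_mul]
    · intro i _
      have : Integrable (fun x : I01 => (x : ℝ) ^ i) m :=
        integrable_of_continuousMap ⟨fun x => (x : ℝ) ^ i, by continuity⟩
      exact this.const_mul _
  rw [key μ, key ν]
  exact Finset.sum_congr rfl fun i _ => by rw [h i]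

/-- Equal integrals of polynomials implies equal integrals of continuous functions. -/
lemma integral_continuous_eq {μ ν : Measure I01}
    [IsProbabilityMeasure μ] [IsProbabilityMeasure ν]
    (h : ∀ n : ℕ, ∫ x : I01, (x : ℝ) ^ n ∂μ = ∫ x : I01, (x : ℝ) ^ n ∂ν)
    (g : C(I01, ℝ)) : ∫ x, g x ∂μ = ∫ x, g x ∂ν := by
  apply eq_of_forall_dist_le
  intro ε hε
  have hdense : closure ((polynomialFunctions I01 : Subalgebra ℝ C(I01, ℝ)) : Set C(I01, ℝ))
      = Set.univ := by
    have := polynomialFunctions_closure_eq_top (0:ℝ) 1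
    rw [← Subalgebra.topologicalClosure_coe, this]
    rfl
  have hg : g ∈ closure ((polynomialFunctions I01 : Subalgebra ℝ C(I01, ℝ)) : Set C(I01, ℝ)) := by
    rw [hdense]; trivial
  rw [Metric.mem_closure_iff] at hg
  obtain ⟨q, hq_mem, hq_dist⟩ := hg (ε / 3) (by linarith)
  rw [SetLike.mem_coe] at hq_mem
  have : q ∈ (polynomialFunctions I01 : Subalgebra ℝ C(I01, ℝ)) := hq_mem
  rw [← SetLike.mem_coe, polynomialFunctions_coe] at this
  obtain ⟨p, rfl⟩ := this
  have hq_eq : ∀ x : I01, (Polynomial.toContinuousMapOnAlgHom I01 p) x = p.eval (x : ℝ) := by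
    intro x; rfl
  -- pointwise bound
  have hbound : ∀ (m : Measure I01) [IsProbabilityMeasure m],
      ‖∫ x, g x ∂m - ∫ x, (Polynomial.toContinuousMapOnAlgHom I01 p) x ∂m‖ ≤ ε / 3 := by
    intro m _
    have h1 : Integrable (fun x => g x) m := integrable_of_continuousMap g
    have h2 : Integrable (fun x => (Polynomial.toContinuousMapOnAlgHom I01 p) x) m :=
      integrable_of_continuousMap _
    rw [← integral_sub h1 h2]
    have hb : ∀ᵐ x ∂m, ‖g x - (Polynomial.toContinuousMapOnAlgHom I01 p) x‖ ≤ ε / 3 := by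
      refine Filter.Eventually.of_forall fun x => ?_
      have := ContinuousMap.dist_apply_le_dist (f := g)
        (g := (Polynomial.toContinuousMapOnAlgHom I01 p)) x
      calc ‖g x - (Polynomial.toContinuousMapOnAlgHom I01 p) x‖
          = dist (g x) ((Polynomial.toContinuousMapOnAlgHom I01 p) x) := by
            rw [Real.norm_eq_abs, Real.dist_eq]
        _ ≤ dist g (Polynomial.toContinuousMapOnAlgHom I01 p) := this
        _ ≤ ε / 3 := le_of_lt hq_dist
    calc ‖∫ x, (g x - (Polynomial.toContinuousMapOnAlgHom I01 p) x) ∂m‖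
        ≤ ε / 3 * (m Set.univ).toReal := norm_integral_le_of_norm_le_const hb
      _ = ε / 3 := by simp
  have hpoly : ∫ x, (Polynomial.toContinuousMapOnAlgHom I01 p) x ∂μ
      = ∫ x, (Polynomial.toContinuousMapOnAlgHom I01 p) x ∂ν := by
    simp_rw [hq_eq]
    exact integral_poly_eq h p
  have hμ := hbound μ
  have hν := hbound ν
  rw [Real.norm_eq_abs] at hμ hν
  rw [Real.dist_eq]
  calc |∫ x, g x ∂μ - ∫ x, g x ∂ν|
      = |(∫ x, g x ∂μ - ∫ x, (Polynomial.toContinuousMapOnAlgHom I01 p) x ∂μ)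
          + (∫ x, (Polynomial.toContinuousMapOnAlgHom I01 p) x ∂μ
              - ∫ x, (Polynomial.toContinuousMapOnAlgHom I01 p) x ∂ν)
          + (∫ x, (Polynomial.toContinuousMapOnAlgHom I01 p) x ∂ν - ∫ x, g x ∂ν)| := by
        ring_nf
    _ ≤ ε / 3 + ε / 3 + ε / 3 := by
        have h3 : |∫ x, (Polynomial.toContinuousMapOnAlgHom I01 p) x ∂ν - ∫ x, g x ∂ν| ≤ ε / 3 := by
          rw [abs_sub_comm]; exact hν
        have h4 : |∫ x, (Polynomial.toContinuousMapOnAlgHom I01 p) x ∂μ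
            - ∫ x, (Polynomial.toContinuousMapOnAlgHom I01 p) x ∂ν| = 0 := by
          rw [hpoly]; simp
        calc |_ + _ + _| ≤ |_| + |_| + |_| := abs_add_three _ _ _
          _ ≤ ε / 3 + ε / 3 + ε / 3 := by
              refine add_le_add (add_le_add hμ ?_) h3
              rw [h4]; linarith
    _ = ε := by ring

/-- Two probability measures on `[0,1]` with equal moments are equal. -/
lemma ext_of_moments {μ ν : Measure I01}
    [IsProbabilityMeasure μ] [IsProbabilityMeasure ν]
    (h : ∀ n : ℕ, ∫ x : I01, (x : ℝ) ^ n ∂μ = ∫ x : I01, (x : ℝ) ^ n ∂ν) : μ = ν := by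
  apply ext_of_forall_lintegral_eq_of_IsFiniteMeasure
  intro f
  have key : ∫ x, ((f x : ℝ)) ∂μ = ∫ x, ((f x : ℝ)) ∂ν :=
    integral_continuous_eq h ⟨fun x => (f x : ℝ), by continuity⟩
  have h1 : ∫⁻ x, f x ∂μ ≠ ⊤ := (f.lintegral_lt_top_of_nnreal μ).ne
  have h2 : ∫⁻ x, f x ∂ν ≠ ⊤ := (f.lintegral_lt_top_of_nnreal ν).ne
  rw [← ENNReal.toReal_eq_toReal_iff' h1 h2,
    BoundedContinuousFunction.toReal_lintegral_coe_eq_integral,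
    BoundedContinuousFunction.toReal_lintegral_coe_eq_integral]
  exact key

end

end CancelAux

/-- If `X` is independent of `Y` and of `Z`, all nonnegative, and `X + Y` has the same
distribution as `X + Z`, then `Y` and `Z` have the same distribution. -/
theorem cancel_independent_nonneg_summand
    {Ω : Type*} [MeasureSpace Ω] [IsProbabilityMeasure (ℙ : Measure Ω)]
    (X Y Z : Ω → ℝ) (hX : Measurable X) (hY : Measurable Y) (hZ : Measurable Z)
    (hXnn : ∀ᵐ ω ∂ℙ, 0 ≤ X ω) (hYnn : ∀ᵐ ω ∂ℙ, 0 ≤ Y ω) (hZnn : ∀ᵐ ω ∂ℙ, 0 ≤ Z ω)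
    (hXY : IndepFun X Y ℙ) (hXZ : IndepFun X Z ℙ)
    (hsum : Measure.map (fun ω => X ω + Y ω) ℙ = Measure.map (fun ω => X ω + Z ω) ℙ) :
    Measure.map Y ℙ = Measure.map Z ℙ := by
  -- step A: equality of Laplace transforms at natural arguments
  have laplace : ∀ s : ℝ, 0 ≤ s →
      ∫ ω, Real.exp (-(s * Y ω)) ∂ℙ = ∫ ω, Real.exp (-(s * Z ω)) ∂ℙ := by
    intro s hs
    set e : ℝ → ℝ := fun t => Real.exp (-(s * t)) with he
    have hem : Measurable e := by
      apply Real.measurable_exp.comp; exact (measurable_const.mul measurable_id).neg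
    have hfac : ∀ (W : Ω → ℝ), Measurable W → IndepFun X W ℙ →
        ∫ ω, e (X ω + W ω) ∂ℙ = (∫ ω, e (X ω) ∂ℙ) * ∫ ω, e (W ω) ∂ℙ := by
      intro W hW hind
      have hpt : ∀ ω, e (X ω + W ω) = e (X ω) * e (W ω) := by
        intro ω; simp only [he, ← Real.exp_add]; ring_nf
      have hind' : IndepFun (e ∘ X) (e ∘ W) ℙ := hind.comp hem hem
      have := IndepFun.integral_mul_eq_mul_integral hind'
        ((hem.comp hX).aestronglyMeasurable) ((hem.comp hW).aestronglyMeasurable)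
      simp only [Function.comp] at this
      calc ∫ ω, e (X ω + W ω) ∂ℙ = ∫ ω, e (X ω) * e (W ω) ∂ℙ := by simp_rw [hpt]
        _ = (∫ ω, e (X ω) ∂ℙ) * ∫ ω, e (W ω) ∂ℙ := this
    have hmapped : ∫ ω, e (X ω + Y ω) ∂ℙ = ∫ ω, e (X ω + Z ω) ∂ℙ := by
      rw [← integral_map (φ := fun ω => X ω + Y ω) (hX.add hY).aemeasurable hem.aestronglyMeasurable,
        ← integral_map (φ := fun ω => X ω + Z ω) (hX.add hZ).aemeasurable hem.aestronglyMeasurable, hsum]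
    rw [hfac Y hY hXY, hfac Z hZ hXZ] at hmapped
    -- cancel the strictly positive factor
    have heX_int : Integrable (fun ω => e (X ω)) ℙ := by
      refine Integrable.mono' (integrable_const 1) ((hem.comp hX).aestronglyMeasurable) ?_
      filter_upwards [hXnn] with ω hω
      rw [Real.norm_eq_abs, abs_of_pos (Real.exp_pos _)]
      exact Real.exp_le_one_iff.mpr (by nlinarith)
    have heX_pos : 0 < ∫ ω, e (X ω) ∂ℙ := by
      rw [integral_pos_iff_support_of_nonneg_ae
        (Filter.Eventually.of_forall fun ω => (Real.exp_pos _).le) heX_int]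
      have : (Function.support fun ω => e (X ω)) = Set.univ := by
        ext ω; simp [he, Real.exp_ne_zero]
      rw [this]
      simp
    exact mul_left_cancel₀ heX_pos.ne' hmapped
  -- step B: push forward to [0,1] via y ↦ exp (-y)
  set φ : ℝ → Set.Icc (0:ℝ) 1 := fun y => Set.projIcc 0 1 zero_le_one (Real.exp (-y)) with hφ
  have hφm : Measurable φ := (continuous_projIcc.comp (Real.continuous_exp.comp
    continuous_neg)).measurable
  set μ := Measure.map Y ℙ with hμdef
  set ν := Measure.map Z ℙ with hνdef
  have hμprob : IsProbabilityMeasure μ := Measure.isProbabilityMeasure_map hY.aemeasurable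
  have hνprob : IsProbabilityMeasure ν := Measure.isProbabilityMeasure_map hZ.aemeasurable
  have hμae : ∀ᵐ y ∂μ, 0 ≤ y := by
    rw [hμdef, MeasureTheory.ae_map_iff hY.aemeasurable (by exact measurableSet_Ici : MeasurableSet {y : ℝ | 0 ≤ y})]
    exact hYnn
  have hνae : ∀ᵐ y ∂ν, 0 ≤ y := by
    rw [hνdef, MeasureTheory.ae_map_iff hZ.aemeasurable (by exact measurableSet_Ici : MeasurableSet {y : ℝ | 0 ≤ y})]
    exact hZnn
  have hφcoe : ∀ y : ℝ, 0 ≤ y → ((φ y : ℝ)) = Real.exp (-y) := by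
    intro y hy
    have hmem : Real.exp (-y) ∈ Set.Icc (0:ℝ) 1 :=
      ⟨(Real.exp_pos _).le, Real.exp_le_one_iff.mpr (by linarith)⟩
    have : φ y = ⟨Real.exp (-y), hmem⟩ := Set.projIcc_of_mem _ hmem
    rw [this]
  -- moments of the pushforwards agree
  have hmom : ∀ n : ℕ, ∫ x : Set.Icc (0:ℝ) 1, (x : ℝ) ^ n ∂(Measure.map φ μ)
      = ∫ x : Set.Icc (0:ℝ) 1, (x : ℝ) ^ n ∂(Measure.map φ ν) := by
    intro n
    have hsm : AEStronglyMeasurable (fun x : Set.Icc (0:ℝ) 1 => (x : ℝ) ^ n)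
        (Measure.map φ μ) ∧ AEStronglyMeasurable (fun x : Set.Icc (0:ℝ) 1 => (x : ℝ) ^ n)
        (Measure.map φ ν) :=
      ⟨((measurable_subtype_coe.pow_const n).aestronglyMeasurable),
        ((measurable_subtype_coe.pow_const n).aestronglyMeasurable)⟩
    rw [integral_map hφm.aemeasurable hsm.1, integral_map hφm.aemeasurable hsm.2]
    have hμn : ∫ y, ((φ y : ℝ)) ^ n ∂μ = ∫ y, Real.exp (-((n : ℝ) * y)) ∂μ := by
      apply integral_congr_ae
      filter_upwards [hμae] with y hy
      rw [hφcoe y hy, ← Real.exp_nat_mul]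
      ring_nf
    have hνn : ∫ y, ((φ y : ℝ)) ^ n ∂ν = ∫ y, Real.exp (-((n : ℝ) * y)) ∂ν := by
      apply integral_congr_ae
      filter_upwards [hνae] with y hy
      rw [hφcoe y hy, ← Real.exp_nat_mul]
      ring_nf
    rw [hμn, hνn]
    have hesm : AEStronglyMeasurable (fun t : ℝ => Real.exp (-((n:ℝ) * t))) μ ∧
        AEStronglyMeasurable (fun t : ℝ => Real.exp (-((n:ℝ) * t))) ν := by
      constructor <;>
        exact (Real.measurable_exp.comp
          ((measurable_const.mul measurable_id).neg)).aestronglyMeasurable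
    rw [hμdef, hνdef,
      integral_map hY.aemeasurable (by rw [← hμdef]; exact hesm.1),
      integral_map hZ.aemeasurable (by rw [← hνdef]; exact hesm.2)]
    exact laplace (n : ℝ) (Nat.cast_nonneg n)
  have hmapφ : Measure.map φ μ = Measure.map φ ν := by
    have : IsProbabilityMeasure (Measure.map φ μ) := Measure.isProbabilityMeasure_map hφm.aemeasurable
    have : IsProbabilityMeasure (Measure.map φ ν) := Measure.isProbabilityMeasure_map hφm.aemeasurable
    exact CancelAux.ext_of_moments hmom
  -- step C: recover μ and ν
  set ψ : Set.Icc (0:ℝ) 1 → ℝ := fun x => -Real.log x with hψ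
  have hψm : Measurable ψ := (Real.measurable_log.comp measurable_subtype_coe).neg
  have hrecover : ∀ (m : Measure ℝ), (∀ᵐ y ∂m, 0 ≤ y) → Measure.map ψ (Measure.map φ m) = m := by
    intro m hm
    rw [Measure.map_map hψm hφm]
    have : (ψ ∘ φ) =ᵐ[m] id := by
      filter_upwards [hm] with y hy
      simp only [Function.comp_apply, id_eq, hψ]
      rw [hφcoe y hy, Real.log_exp, neg_neg]
    rw [Measure.map_congr this, Measure.map_id]
  calc μ = Measure.map ψ (Measure.map φ μ) := (hrecover μ hμae).symm
    _ = Measure.map ψ (Measure.map φ ν) := by rw [hmapφ]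
    _ = ν := hrecover ν hνae
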